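/- Let (g, ·) be a pre-Lie algebra. The semi-direct product pre-Lie algebra d = g ⋉ g* with multiplication (x,ξ)∗(y,η) = (x·y, ad*_x η − R*_y ξ) together with the bilinear form ((x,ξ),(y,η))₋ = ⟨ξ,y⟩ − ⟨x,η⟩ is a quadratic pre-Lie algebra: the form is nondegenerate, skew-symmetric, and invariant, i.e. (a∗b, c)₋ + (b, [a,c])₋ = 0 for all a,b,c ∈ d, where [a,c] = a∗c − c∗a. -/
import Mathlib


/-- The pre-Lie identity for a multiplication on an additive group. -/
def IsPreLieMul {A : Type*} [AddCommGroup A] (f : A → A → A) : Prop :=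
  ∀ x y z : A, f (f x y) z - f x (f y z) = f (f y x) z - f y (f x z)

/-- For a finite-dimensional pre-Lie algebra `(g, ·)`, the
semi-direct product `d = g ⋉ g*` with
`(x,ξ) ∗ (y,η) = (x·y, ad*_x η − R*_y ξ)`, where `(ad*_x η)(z) = −η([x,z])`
and `(−R*_y ξ)(z) = ξ(z·y)`, together with
`((x,ξ),(y,η))₋ = ⟨ξ,y⟩ − ⟨x,η⟩`, is a quadratic pre-Lie algebra: the
multiplication is pre-Lie and the form is nondegenerate, skew-symmetric and
invariant: `(a∗b, c)₋ + (b, a∗c − c∗a)₋ = 0`. -/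
theorem semidirect_dual_quadratic_preLie
    {𝕜 G : Type*} [Field 𝕜] [CharZero 𝕜] [AddCommGroup G] [Module 𝕜 G]
    [FiniteDimensional 𝕜 G]
    (m : G →ₗ[𝕜] G →ₗ[𝕜] G)
    (hm : ∀ x y z : G, m (m x y) z - m x (m y z) = m (m y x) z - m y (m x z)) :
    let f : (G × Module.Dual 𝕜 G) → (G × Module.Dual 𝕜 G) →
        (G × Module.Dual 𝕜 G) :=
      fun p q => (m p.1 q.1,
        -((m p.1 - m.flip p.1).dualMap q.2) + (m.flip q.1).dualMap p.2)
    let B : (G × Module.Dual 𝕜 G) → (G × Module.Dual 𝕜 G) → 𝕜 :=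
      fun p q => p.2 q.1 - q.2 p.1
    IsPreLieMul f ∧
      (∀ p q : G × Module.Dual 𝕜 G, B p q = -B q p) ∧
      (∀ p : G × Module.Dual 𝕜 G, (∀ q, B p q = 0) → p = 0) ∧
      (∀ a b c : G × Module.Dual 𝕜 G, B (f a b) c + B b (f a c - f c a) = 0) := by
  intro f B
  have hmf : ∀ (φ : Module.Dual 𝕜 G) (x y z : G),
      φ (m (m x y) z) - φ (m x (m y z)) = φ (m (m y x) z) - φ (m y (m x z)) := by
    intro φ x y z
    have := congrArg φ (hm x y z)
    simpa [map_sub] using this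
  refine ⟨?_, ?_, ?_, ?_⟩
  · intro p q r
    obtain ⟨x, ξ⟩ := p; obtain ⟨y, η⟩ := q; obtain ⟨z, ζ⟩ := r
    refine Prod.ext ?_ ?_
    · simpa using hm x y z
    · apply LinearMap.ext; intro w
      simp only [f, Prod.fst, Prod.snd, Prod.mk_sub_mk, LinearMap.sub_apply,
        LinearMap.add_apply, LinearMap.neg_apply, LinearMap.dualMap_apply,
        LinearMap.flip_apply, map_sub, map_add, map_neg]
      linear_combination (-hmf ζ x y w) + (-hmf ζ w x y) + (-hmf ζ y w x)
        + hmf η x w z + (-hmf ξ y w z)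
  · intro p q
    simp only [B]
    ring
  · intro p hp
    obtain ⟨x, ξ⟩ := p
    have h1 : ξ = 0 := by
      apply LinearMap.ext; intro y
      simpa [B] using hp (y, 0)
    have h2 : x = 0 := by
      rw [← Module.forall_dual_apply_eq_zero_iff 𝕜]
      intro φ
      have := hp (0, φ)
      simp [B] at this
      simpa using this
    simp [h1, h2, Prod.ext_iff]
  · intro a b c
    obtain ⟨x, ξ⟩ := a; obtain ⟨y, η⟩ := b; obtain ⟨z, ζ⟩ := c
    simp only [f, B, Prod.fst, Prod.snd, Prod.mk_sub_mk, LinearMap.sub_apply,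
      LinearMap.add_apply, LinearMap.neg_apply, LinearMap.dualMap_apply,
      LinearMap.flip_apply, map_sub, map_add, map_neg]
    ring
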